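/- For all s ∈ ℝ: ⟨β(s), β(s)⟩ = 1, ⟨β′(s), β′(s)⟩ = 1, ⟨β(s), β′(s)⟩ = 0, and ⟨β′(s), J₁β(s)⟩ = 2λd/(1+d²) = λ√(λ+ν²)/√(λB). In particular β is a unit-speed curve on the unit sphere S³ ⊂ ℝ⁴ making a constant Euclidean angle with the Hopf direction J₁β. -/

import Mathlib

open Matrix Real

noncomputable def J1 : Matrix (Fin 4) (Fin 4) ℝ :=
  !![0,-1,0,0; 1,0,0,0; 0,0,0,-1; 0,0,1,0]

set_option maxHeartbeats 1000000 in
/-- the curve `β(s) = (1/√(1+d²))(d cos(s/d), λd sin(s/d), cos(ds), λ sin(ds))`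
is a unit-speed curve on `S³` making the constant Euclidean angle
`⟨β′, J₁β⟩ = 2λd/(1+d²) = λ√(λ+ν²)/√(λB)` with the Hopf direction `J₁β`. -/
theorem stmt15 (ε lam ν B d : ℝ) (hε : 0 < ε)
    (hcase : (lam = -1 ∧ 1 < ν ^ 2) ∨ (lam = 1 ∧ ν ≠ 0))
    (hB : B = 1 + lam * ν ^ 2 * (1 + ε ^ 2))
    (hd : d = (Real.sqrt (lam * B) - ε * |ν|) / Real.sqrt (lam + ν ^ 2))
    (β : ℝ → Fin 4 → ℝ)
    (hβ : ∀ s, β s = (1 / Real.sqrt (1 + d ^ 2)) •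
      ![d * cos (s / d), lam * d * sin (s / d), cos (d * s), lam * sin (d * s)]) :
    ∀ s : ℝ,
      β s ⬝ᵥ β s = 1 ∧
      deriv β s ⬝ᵥ deriv β s = 1 ∧
      β s ⬝ᵥ deriv β s = 0 ∧
      deriv β s ⬝ᵥ (J1 *ᵥ β s) = 2 * lam * d / (1 + d ^ 2) ∧
      2 * lam * d / (1 + d ^ 2)
        = lam * Real.sqrt (lam + ν ^ 2) / Real.sqrt (lam * B) := by
  have hl2 : lam ^ 2 = 1 := by rcases hcase with ⟨h, _⟩ | ⟨h, _⟩ <;> rw [h] <;> norm_num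
  have hc2 : 0 < lam + ν ^ 2 := by
    rcases hcase with ⟨h, h2⟩ | ⟨h, h2⟩
    · rw [h]; linarith
    · rw [h]; positivity
  have hab : lam * B = (lam + ν ^ 2) + ε ^ 2 * ν ^ 2 := by
    rw [hB]; linear_combination ν ^ 2 * (1 + ε ^ 2) * hl2
  have hB2 : 0 < lam * B := by rw [hab]; positivity
  set a := Real.sqrt (lam * B) with ha_def
  set c := Real.sqrt (lam + ν ^ 2) with hc_def
  have ha2 : a ^ 2 = lam * B := Real.sq_sqrt hB2.le
  have hcsq : c ^ 2 = lam + ν ^ 2 := Real.sq_sqrt hc2.le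
  have ha0 : 0 < a := Real.sqrt_pos.mpr hB2
  have hc0 : 0 < c := Real.sqrt_pos.mpr hc2
  have he : ε * |ν| < a := by
    have h1 : ε * |ν| = Real.sqrt (ε ^ 2 * ν ^ 2) := by
      rw [Real.sqrt_mul (by positivity), Real.sqrt_sq hε.le, Real.sqrt_sq_eq_abs]
    rw [h1, ha_def]
    apply Real.sqrt_lt_sqrt (by positivity)
    rw [hab]; linarith
  have hd0 : 0 < d := by rw [hd]; exact div_pos (by linarith) hc0
  have hdc : d * c = a - ε * |ν| := by rw [hd]; field_simp
  have hE : (ε * |ν|) ^ 2 = ε ^ 2 * ν ^ 2 := by rw [mul_pow, sq_abs]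
  have key : (1 + d ^ 2) * c ^ 2 = 2 * a * (a - ε * |ν|) := by
    nlinarith [hdc, ha2, hcsq, hE, hab]
  have h1d : (0:ℝ) < 1 + d ^ 2 := by positivity
  have h2 : 2 * d * a = c * (1 + d ^ 2) := by
    have h3 : c * (2 * d * a) = c * (c * (1 + d ^ 2)) := by
      linear_combination 2 * a * hdc - key
    exact mul_left_cancel₀ hc0.ne' h3
  have hlast : 2 * lam * d / (1 + d ^ 2) = lam * c / a := by
    rw [div_eq_div_iff h1d.ne' ha0.ne']
    linear_combination lam * h2
  -- derivative
  set k := 1 / Real.sqrt (1 + d ^ 2) with hk_def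
  have hk2 : k ^ 2 * (1 + d ^ 2) = 1 := by
    rw [hk_def, div_pow, one_pow, Real.sq_sqrt h1d.le]
    field_simp
  have hβf : β = fun s => k • ![d * cos (s / d), lam * d * sin (s / d), cos (d * s), lam * sin (d * s)] := funext hβ
  have hder : ∀ s : ℝ, HasDerivAt β
      (k • ![-sin (s / d), lam * cos (s / d), -(d * sin (d * s)), lam * (d * cos (d * s))]) s := by
    intro s
    rw [hβf]
    apply HasDerivAt.const_smul (c := k) (f := fun s => ![d * cos (s / d), lam * d * sin (s / d), cos (d * s), lam * sin (d * s)])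
    apply hasDerivAt_pi.mpr
    intro i
    fin_cases i
    · simpa using (((hasDerivAt_id s).div_const d).cos.const_mul d).congr_deriv (by
        simp only [id_eq]; field_simp)
    · simpa using (((hasDerivAt_id s).div_const d).sin.const_mul (lam * d)).congr_deriv (by
        simp only [id_eq]; field_simp)
    · simpa using (((hasDerivAt_id s).const_mul d).cos).congr_deriv (by
        simp only [id_eq]; ring)
    · simpa using ((((hasDerivAt_id s).const_mul d).sin).const_mul lam).congr_deriv (by
        simp only [id_eq]; ring)
  intro s
  have hD : deriv β s = k • ![-sin (s / d), lam * cos (s / d), -(d * sin (d * s)), lam * (d * cos (d * s))] :=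
    (hder s).deriv
  have p1 : sin (s / d) ^ 2 + cos (s / d) ^ 2 = 1 := sin_sq_add_cos_sq _
  have p2 : sin (d * s) ^ 2 + cos (d * s) ^ 2 = 1 := sin_sq_add_cos_sq _
  have hJ : J1 *ᵥ (β s) = k • ![-(lam * d * sin (s / d)), d * cos (s / d), -(lam * sin (d * s)), cos (d * s)] := by
    rw [hβ s]
    funext i
    fin_cases i <;>
      simp [J1, Matrix.mulVec, dotProduct, Fin.sum_univ_four]
  refine ⟨?_, ?_, ?_, ?_, hlast⟩
  · rw [hβ s]
    simp only [dotProduct, Fin.sum_univ_four, Pi.smul_apply, smul_eq_mul,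
      Matrix.cons_val_zero, Matrix.cons_val_one, Matrix.head_cons,
      Matrix.cons_val_two, Matrix.tail_cons, Matrix.cons_val_three]
    linear_combination (k ^ 2 * d ^ 2 * sin (s / d) ^ 2 + k ^ 2 * sin (d * s) ^ 2) * hl2
      + k ^ 2 * d ^ 2 * p1 + k ^ 2 * p2 + hk2
  · rw [hD]
    simp only [dotProduct, Fin.sum_univ_four, Pi.smul_apply, smul_eq_mul,
      Matrix.cons_val_zero, Matrix.cons_val_one, Matrix.head_cons,
      Matrix.cons_val_two, Matrix.tail_cons, Matrix.cons_val_three]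
    linear_combination (k ^ 2 * cos (s / d) ^ 2 + k ^ 2 * d ^ 2 * cos (d * s) ^ 2) * hl2
      + k ^ 2 * p1 + k ^ 2 * d ^ 2 * p2 + hk2
  · rw [hβ s, hD]
    simp only [dotProduct, Fin.sum_univ_four, Pi.smul_apply, smul_eq_mul,
      Matrix.cons_val_zero, Matrix.cons_val_one, Matrix.head_cons,
      Matrix.cons_val_two, Matrix.tail_cons, Matrix.cons_val_three]
    linear_combination (k ^ 2 * d * (sin (s / d) * cos (s / d) + sin (d * s) * cos (d * s))) * hl2
  · rw [hD, hJ]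
    simp only [dotProduct, Fin.sum_univ_four, Pi.smul_apply, smul_eq_mul,
      Matrix.cons_val_zero, Matrix.cons_val_one, Matrix.head_cons,
      Matrix.cons_val_two, Matrix.tail_cons, Matrix.cons_val_three]
    rw [eq_div_iff h1d.ne']
    linear_combination lam * d * (1 + d ^ 2) * k ^ 2 * p1 + lam * d * (1 + d ^ 2) * k ^ 2 * p2
      + 2 * lam * d * hk2
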